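/- Suppose X and Y are topological spaces and Y is I-favorable. If E ⊆ X × Y is open and dense in the product topology, then there exists a meager set P ⊆ X such that the section E_x = {y ∈ Y : (x,y) ∈ E} is dense in Y for all x ∈ X \ P. -/

import Mathlib

open Set TopologicalSpace

variable (X : Type*) [TopologicalSpace X]

/-- A valid move of Player I: a finite family of nonempty open sets. -/
def IMove (A : Set (Set X)) : Prop :=
  A.Finite ∧ ∀ U ∈ A, IsOpen U ∧ U.Nonempty

/-- A valid response of Player II to the family `A`: a finite family of nonempty
open sets such that every member of `A` contains some member of `B`. -/
def IIMove (A B : Set (Set X)) : Prop :=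
  IMove X B ∧ ∀ U ∈ A, ∃ V ∈ B, V ⊆ U

/-- `X` is I-favorable: Player I has a winning strategy in the finite open-open
game. A strategy is a function from histories of Player II's moves to the next
move of Player I; it is winning if for every play in which Player II always
responds validly, each tail union of Player II's families is dense. -/
def IFavorable : Prop :=
  ∃ σ : List (Set (Set X)) → Set (Set X),
    (∀ hist, IMove X (σ hist)) ∧
    ∀ B : ℕ → Set (Set X),
      (∀ n, IIMove X (σ ((List.range n).map B)) (B n)) →
      ∀ k, Dense (⋃ (n : ℕ) (_ : k ≤ n), ⋃₀ B n)

/-- Player II has a winning strategy in the finite open-open game: a function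
from histories of Player I's moves to responses of Player II which are valid,
and such that whenever Player I plays validly, some tail union of Player II's
families fails to be dense. -/
def IIFavorable : Prop :=
  ∃ τ : List (Set (Set X)) → Set (Set X),
    ∀ A : ℕ → Set (Set X), (∀ n, IMove X (A n)) →
      (∀ n, IIMove X (A n) (τ ((List.range (n + 1)).map A))) ∧
      ∃ k, ¬ Dense (⋃ (n : ℕ) (_ : k ≤ n), ⋃₀ τ ((List.range (n + 1)).map A))

/-- `Q` is a π-base for `X`: a family of nonempty open sets such that every
nonempty open set contains a member of the family. -/
def IsPiBase (Q : Set (Set X)) : Prop :=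
  (∀ U ∈ Q, IsOpen U ∧ U.Nonempty) ∧
  ∀ V : Set X, IsOpen V → V.Nonempty → ∃ U ∈ Q, U ⊆ V

/-- `C` is a club filter with respect to the π-base `Q`. -/
def IsClubFilter (Q : Set (Set X)) (C : Set (Set (Set X))) : Prop :=
  (∀ P ∈ C, P.Countable ∧ P ⊆ Q) ∧
  (∀ P : ℕ → Set (Set X), (∀ n, P n ∈ C) → Monotone P → (⋃ n, P n) ∈ C) ∧
  (∀ A : Set (Set X), A.Countable → A ⊆ Q → ∃ P ∈ C, A ⊆ P) ∧
  (∀ V : Set X, IsOpen V → V.Nonempty →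
    ∀ P ∈ C, ∃ W ∈ P, ∀ U ∈ P, U ⊆ W → (U ∩ V).Nonempty)

section Aux

variable {X Y : Type*} [TopologicalSpace X] [TopologicalSpace Y]

/-- A valid partial play against strategy `σ` (history in chronological order). -/
def AuxValidPlay (σ : List (Set (Set Y)) → Set (Set Y)) (L : List (Set (Set Y))) : Prop :=
  ∀ pre cur post, L = pre ++ cur :: post → IIMove Y (σ pre) cur

/-- A good pair: open nonempty `W ⊆ X`, a valid play `L` against `σ`, such that
every set of every move of `L` satisfies `W ×ˢ V ⊆ E`. -/
def AuxGoodPair (E : Set (X × Y)) (σ : List (Set (Set Y)) → Set (Set Y))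
    (p : Set X × List (Set (Set Y))) : Prop :=
  IsOpen p.1 ∧ p.1.Nonempty ∧ AuxValidPlay σ p.2 ∧ ∀ A ∈ p.2, ∀ V ∈ A, p.1 ×ˢ V ⊆ E

def AuxFam (E : Set (X × Y)) (σ : List (Set (Set Y)) → Set (Set Y)) (n : ℕ)
    (F : Set (Set X × List (Set (Set Y)))) : Prop :=
  (∀ p ∈ F, AuxGoodPair E σ p ∧ p.2.length = n) ∧
  (∀ p ∈ F, ∀ q ∈ F, (p.1 ∩ q.1).Nonempty → p = q) ∧
  Dense (⋃ p ∈ F, p.1)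

lemma aux_shrink (E : Set (X × Y)) (hEo : IsOpen E) (hEd : Dense E)
    (A : Set (Set Y)) (hA : A.Finite) :
    (∀ U ∈ A, IsOpen U ∧ U.Nonempty) →
    ∀ W : Set X, IsOpen W → W.Nonempty →
    ∃ W' B, IsOpen W' ∧ W'.Nonempty ∧ W' ⊆ W ∧ IIMove Y A B ∧ ∀ V ∈ B, W' ×ˢ V ⊆ E := by
  refine Set.Finite.induction_on (motive := fun A _ => (∀ U ∈ A, IsOpen U ∧ U.Nonempty) →
    ∀ W : Set X, IsOpen W → W.Nonempty →
    ∃ W' B, IsOpen W' ∧ W'.Nonempty ∧ W' ⊆ W ∧ IIMove Y A B ∧ ∀ V ∈ B, W' ×ˢ V ⊆ E)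
    A hA ?_ ?_
  · intro _ W hWo hWne
    exact ⟨W, ∅, hWo, hWne, Subset.rfl, ⟨⟨Set.finite_empty, by simp⟩, by simp⟩, by simp⟩
  · intro U s hUs hsfin ih hAU W hWo hWne
    obtain ⟨W₁, B', hW₁o, hW₁ne, hW₁W, hB', hB'E⟩ :=
      ih (fun U' hU' => hAU U' (Set.mem_insert_of_mem _ hU')) W hWo hWne
    obtain ⟨hUo, hUne⟩ := hAU U (Set.mem_insert _ _)
    have hbox : IsOpen ((W₁ ×ˢ U) ∩ E) := (hW₁o.prod hUo).inter hEo
    obtain ⟨z, hz⟩ := hEd.inter_open_nonempty _ (hW₁o.prod hUo) (hW₁ne.prod hUne)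
    obtain ⟨u, v, huo, hvo, hzu, hzv, huv⟩ :=
      isOpen_prod_iff.mp hbox z.1 z.2 (by simpa using hz)
    have huW₁ : u ⊆ W₁ := fun a ha => ((huv (Set.mk_mem_prod ha hzv)).1).1
    have hvU : v ⊆ U := fun y hy => ((huv (Set.mk_mem_prod hzu hy)).1).2
    refine ⟨u, insert v B', huo, ⟨z.1, hzu⟩, fun a ha => hW₁W (huW₁ ha),
      ⟨⟨hB'.1.1.insert v, ?_⟩, ?_⟩, ?_⟩
    · rintro V' (rfl | h)
      · exact ⟨hvo, ⟨z.2, hzv⟩⟩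
      · exact hB'.1.2 V' h
    · rintro U' (rfl | h)
      · exact ⟨v, Set.mem_insert _ _, hvU⟩
      · obtain ⟨V', hV', hsub⟩ := hB'.2 U' h
        exact ⟨V', Set.mem_insert_of_mem _ hV', hsub⟩
    · rintro V' (rfl | h)
      · exact fun w hw => (huv hw).2
      · exact fun w hw => hB'E V' h (Set.mem_prod.mpr ⟨huW₁ hw.1, hw.2⟩)

lemma aux_step (E : Set (X × Y)) (hEo : IsOpen E) (hEd : Dense E)
    (σ : List (Set (Set Y)) → Set (Set Y)) (hσ1 : ∀ hist, IMove Y (σ hist))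
    (n : ℕ) (F : Set (Set X × List (Set (Set Y)))) (hF : AuxFam E σ n F) :
    ∃ G, AuxFam E σ (n+1) G ∧ ∀ q ∈ G, ∃ p ∈ F, q.1 ⊆ p.1 ∧ q.2.dropLast = p.2 := by
  classical
  set Good : Set X × List (Set (Set Y)) → Prop := fun q =>
    AuxGoodPair E σ q ∧ q.2.length = n + 1 ∧ ∃ p ∈ F, q.1 ⊆ p.1 ∧ q.2.dropLast = p.2 with hGooddef
  have hzorn : ∀ c ⊆ {G : Set (Set X × List (Set (Set Y))) |
      (∀ q ∈ G, Good q) ∧ ∀ q ∈ G, ∀ r ∈ G, (q.1 ∩ r.1).Nonempty → q = r},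
      IsChain (· ⊆ ·) c → ∃ ub ∈ {G : Set (Set X × List (Set (Set Y))) |
      (∀ q ∈ G, Good q) ∧ ∀ q ∈ G, ∀ r ∈ G, (q.1 ∩ r.1).Nonempty → q = r},
      ∀ s ∈ c, s ⊆ ub := by
    intro c hc hchain
    refine ⟨⋃₀ c, ⟨?_, ?_⟩, fun s hs => subset_sUnion_of_mem hs⟩
    · rintro q ⟨G, hGc, hqG⟩
      exact (hc hGc).1 q hqG
    · rintro q ⟨G₁, hG₁, hq⟩ r ⟨G₂, hG₂, hr⟩ hqr
      rcases hchain.total hG₁ hG₂ with h | h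
      · exact (hc hG₂).2 q (h hq) r hr hqr
      · exact (hc hG₁).2 q hq r (h hr) hqr
  obtain ⟨M, hM⟩ := zorn_subset _ hzorn
  -- M is maximal; show its union is dense
  have hMmem := hM.prop
  have hdense : Dense (⋃ q ∈ M, q.1) := by
    by_contra hnd
    rw [dense_iff_inter_open] at hnd
    push_neg at hnd
    obtain ⟨O, hOo, hOne, hOempty⟩ := hnd
    obtain ⟨w, hwO, hwF⟩ := hF.2.2.inter_open_nonempty O hOo hOne
    rw [Set.mem_iUnion₂] at hwF
    obtain ⟨p, hpF, hwp⟩ := hwF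
    have hWo : IsOpen (O ∩ p.1) := hOo.inter ((hF.1 p hpF).1.1)
    obtain ⟨W', B, hW'o, hW'ne, hW'sub, hIIB, hBE⟩ :=
      aux_shrink E hEo hEd (σ p.2) (hσ1 p.2).1 (hσ1 p.2).2 (O ∩ p.1) hWo ⟨w, hwO, hwp⟩
    have hW'p : W' ⊆ p.1 := fun a ha => (hW'sub ha).2
    have hW'O : W' ⊆ O := fun a ha => (hW'sub ha).1
    have hpGood := (hF.1 p hpF).1
    have hplen := (hF.1 p hpF).2
    have hvalid : AuxValidPlay σ (p.2 ++ [B]) := by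
      intro pre cur post heq
      rcases List.eq_nil_or_concat post with rfl | ⟨post', b, rfl⟩
      · have h1 := congrArg List.dropLast heq
        rw [List.dropLast_concat, List.dropLast_concat] at h1
        subst h1
        have h2 := List.append_cancel_left heq
        simp only [List.cons.injEq] at h2
        rw [← h2.1]
        exact hIIB
      · have heq2 : p.2 ++ [B] = (pre ++ cur :: post') ++ [b] := by rw [heq]; simp
        have h1 := congrArg List.dropLast heq2
        rw [List.dropLast_concat, List.dropLast_concat] at h1
        exact hpGood.2.2.1 pre cur post' h1
    have hqGood : Good (W', p.2 ++ [B]) := by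
      refine ⟨⟨hW'o, hW'ne, hvalid, ?_⟩, by simp [hplen], p, hpF, hW'p, by
        simp [List.dropLast_concat]⟩
      intro A hA V hV
      rcases List.mem_append.mp hA with h | h
      · exact fun w hw => hpGood.2.2.2 A h V hV (Set.mem_prod.mpr ⟨hW'p hw.1, hw.2⟩)
      · simp only [List.mem_singleton] at h
        subst h
        exact hBE V hV
    have hqnotM : (W', p.2 ++ [B]) ∉ M := by
      intro hqM
      obtain ⟨a, ha⟩ := hW'ne
      have : a ∈ O ∩ ⋃ q ∈ M, q.1 := ⟨hW'O ha, Set.mem_biUnion hqM ha⟩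
      rw [hOempty] at this
      exact this
    have hinsert : insert (W', p.2 ++ [B]) M ∈ {G : Set (Set X × List (Set (Set Y))) |
        (∀ q ∈ G, Good q) ∧ ∀ q ∈ G, ∀ r ∈ G, (q.1 ∩ r.1).Nonempty → q = r} := by
      constructor
      · rintro r (rfl | hr)
        · exact hqGood
        · exact hMmem.1 r hr
      · have hdisj : ∀ r ∈ M, ¬(W' ∩ r.1).Nonempty := by
          rintro r hrM ⟨a, haq, har⟩
          have : a ∈ O ∩ ⋃ q ∈ M, q.1 := ⟨hW'O haq, Set.mem_biUnion hrM har⟩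
          rw [hOempty] at this
          exact this
        rintro r (rfl | hr) r' (rfl | hr') hne
        · rfl
        · exact absurd hne (hdisj r' hr')
        · exact absurd (by rwa [Set.inter_comm] at hne) (hdisj r hr)
        · exact hMmem.2 r hr r' hr' hne
    have : insert (W', p.2 ++ [B]) M ⊆ M := hM.le_of_ge hinsert (Set.subset_insert _ M)
    exact hqnotM (this (Set.mem_insert _ M))
  refine ⟨M, ⟨fun p hp => ⟨(hMmem.1 p hp).1, (hMmem.1 p hp).2.1⟩, hMmem.2, hdense⟩,
    fun q hq => (hMmem.1 q hq).2.2⟩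

end Aux

/-- If `Y` is I-favorable and `E ⊆ X × Y` is open and dense, then there is a
meager set `P ⊆ X` such that the section `E_x` is dense in `Y` for all
`x ∈ X \ P`. -/
theorem dense_sections_of_openDense {X Y : Type*} [TopologicalSpace X]
    [TopologicalSpace Y] (hY : IFavorable Y) (E : Set (X × Y))
    (hEo : IsOpen E) (hEd : Dense E) :
    ∃ P : Set X, IsMeagre P ∧
      ∀ x ∈ (Set.univ : Set X) \ P, Dense {y : Y | (x, y) ∈ E} := by
  classical
  rcases isEmpty_or_nonempty X with hX | hX
  · refine ⟨∅, ?_, fun x _ => (IsEmpty.false x).elim⟩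
    rw [IsMeagre, Set.compl_empty]
    exact Filter.univ_mem
  obtain ⟨σ, hσ1, hσ2⟩ := hY
  have hF0 : AuxFam E σ 0 {((Set.univ : Set X), ([] : List (Set (Set Y))))} := by
    refine ⟨?_, ?_, ?_⟩
    · intro q hq
      rw [Set.mem_singleton_iff] at hq
      subst hq
      exact ⟨⟨isOpen_univ, Set.univ_nonempty, fun pre cur post h => absurd h (by simp),
        by simp⟩, rfl⟩
    · intro q hq r hr _
      rw [Set.mem_singleton_iff] at hq hr
      rw [hq, hr]
    · have : (⋃ q ∈ ({((Set.univ : Set X), ([] : List (Set (Set Y))))} :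
          Set (Set X × List (Set (Set Y)))), q.1) = Set.univ := by simp
      rw [this]
      exact dense_univ
  have hstep : ∀ n (F : {F // AuxFam E σ n F}), ∃ G : {G // AuxFam E σ (n+1) G},
      ∀ q ∈ G.1, ∃ p ∈ F.1, q.1 ⊆ p.1 ∧ q.2.dropLast = p.2 := by
    intro n F
    obtain ⟨G, hG, hR⟩ := aux_step E hEo hEd σ hσ1 n F.1 F.2
    exact ⟨⟨G, hG⟩, hR⟩
  choose f hf using hstep
  let seq : ∀ n, {F // AuxFam E σ n F} := fun n =>
    Nat.rec ⟨{((Set.univ : Set X), ([] : List (Set (Set Y))))}, hF0⟩ f n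
  have hRef : ∀ n, ∀ q ∈ (seq (n+1)).1, ∃ p ∈ (seq n).1, q.1 ⊆ p.1 ∧ q.2.dropLast = p.2 :=
    fun n => hf n (seq n)
  set D : ℕ → Set X := fun n => ⋃ q ∈ (seq n).1, q.1 with hD
  have hDo : ∀ n, IsOpen (D n) := fun n =>
    isOpen_biUnion fun q hq => ((seq n).2.1 q hq).1.1
  have hDd : ∀ n, Dense (D n) := fun n => (seq n).2.2.2
  refine ⟨(⋂ n, D n)ᶜ, ?_, ?_⟩
  · rw [IsMeagre, compl_compl]
    exact countable_iInter_mem.mpr fun n => residual_of_dense_open (hDo n) (hDd n)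
  intro x hx
  have hxD : ∀ n, x ∈ D n := fun n =>
    Set.mem_iInter.mp (Set.notMem_compl_iff.mp hx.2) n
  have hxD' : ∀ n, ∃ q, q ∈ (seq n).1 ∧ x ∈ q.1 := by
    intro n
    obtain ⟨q, hq, hxq⟩ := Set.mem_iUnion₂.mp (hxD n)
    exact ⟨q, hq, hxq⟩
  choose p hp hxp using hxD'
  have hgood : ∀ n, AuxGoodPair E σ (p n) := fun n => ((seq n).2.1 _ (hp n)).1
  have hlen : ∀ n, (p n).2.length = n := fun n => ((seq n).2.1 _ (hp n)).2
  have hdrop : ∀ n, (p (n+1)).2.dropLast = (p n).2 := by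
    intro n
    obtain ⟨q, hq, hsub, hdl⟩ := hRef n _ (hp (n+1))
    have hqe : q = p n := (seq n).2.2.1 q hq (p n) (hp n) ⟨x, hsub (hxp (n+1)), hxp n⟩
    rw [hdl, hqe]
  have hne : ∀ n, (p (n+1)).2 ≠ [] := by
    intro n h
    have h2 := hlen (n+1)
    rw [h] at h2
    simp at h2
  set B : ℕ → Set (Set Y) := fun n => (p (n+1)).2.getLast (hne n) with hB
  have hconcat : ∀ n, (p (n+1)).2 = (p n).2 ++ [B n] := by
    intro n
    conv_lhs => rw [← List.dropLast_append_getLast (hne n)]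
    rw [hdrop n]
  have hmap : ∀ n, (List.range n).map B = (p n).2 := by
    intro n
    induction n with
    | zero => simp [List.length_eq_zero_iff.mp (hlen 0)]
    | succ n ih =>
      rw [List.range_succ, List.map_append, ih, hconcat n]
      simp
  have hplay : ∀ n, IIMove Y (σ ((List.range n).map B)) (B n) := by
    intro n
    rw [hmap n]
    exact (hgood (n+1)).2.2.1 (p n).2 (B n) [] (by rw [hconcat n])
  have hd := hσ2 B hplay 0
  refine Dense.mono ?_ hd
  intro y hy
  simp only [Set.mem_iUnion, Set.mem_sUnion] at hy
  obtain ⟨n, -, V, hV, hyV⟩ := hy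
  have hBmem : B n ∈ (p (n+1)).2 := List.getLast_mem (hne n)
  exact (hgood (n+1)).2.2.2 (B n) hBmem V hV (Set.mk_mem_prod (hxp (n+1)) hyV)
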